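/- Define DC(d,2) to be the supremum of the orders 2n of dihedral groups G of order 2n admitting a subset S ⊆ G with 1 ∉ S, S = S⁻¹, |S| = d, and every element of G a product of at most two elements of S (and 0 if no such graph exists). Then limsup_{d→∞} DC(d,2)/d² = 1/2. -/

import Mathlib

/-- `DC d` is the largest number of vertices of a Cayley graph of a dihedral group with
degree `d` and diameter at most 2: the supremum of the orders `2n` of dihedral groups
admitting an inverse-closed, identity-free subset `S` of size `d` such that every group
element is a product of at most two elements of `S` (and `0` if no such graph exists). -/
noncomputable def DC (d : ℕ) : ℕ :=
  sSup {m : ℕ | ∃ n : ℕ, 0 < n ∧ m = 2 * n ∧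
    ∃ S : Finset (DihedralGroup n),
      (1 : DihedralGroup n) ∉ S ∧
      (∀ s ∈ S, s⁻¹ ∈ S) ∧
      S.card = d ∧
      (∀ g : DihedralGroup n, g = 1 ∨ g ∈ S ∨ ∃ a ∈ S, ∃ b ∈ S, g = a * b)}


open DihedralGroup Finset in
lemma dihedral_of_DR {n : ℕ} (D R : Finset (ZMod n))
    (h0R : (0 : ZMod n) ∉ R) (hRsym : ∀ x ∈ R, -x ∈ R)
    (hrot : ∀ t : ZMod n, t = 0 ∨ t ∈ R ∨ ∃ a ∈ D, ∃ b ∈ D, t = a - b)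
    (hrefl : ∀ t : ZMod n, t ∈ D ∨ ∃ a ∈ D, ∃ b ∈ R, t = a + b) :
    ∃ S : Finset (DihedralGroup n),
      (1 : DihedralGroup n) ∉ S ∧ (∀ s ∈ S, s⁻¹ ∈ S) ∧
      S.card = D.card + R.card ∧
      (∀ g : DihedralGroup n, g = 1 ∨ g ∈ S ∨ ∃ a ∈ S, ∃ b ∈ S, g = a * b) := by
  classical
  have hsrinj : Function.Injective (sr (n := n)) := fun a b h => by injection h
  have hrinj : Function.Injective (DihedralGroup.r (n := n)) := fun a b h => by injection h
  refine ⟨D.image sr ∪ R.image DihedralGroup.r, ?_, ?_, ?_, ?_⟩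
  · simp only [mem_union, mem_image, one_def]
    rintro (⟨a, _, h⟩ | ⟨a, ha, h⟩)
    · exact absurd h (by simp [-DihedralGroup.r_zero])
    · exact h0R (hrinj h ▸ ha)
  · intro s hs
    simp only [mem_union, mem_image] at hs ⊢
    obtain ⟨a, ha, rfl⟩ | ⟨a, ha, rfl⟩ := hs
    · refine Or.inl ⟨a, ha, ?_⟩
      symm; apply inv_eq_of_mul_eq_one_right
      simp [one_def, -DihedralGroup.r_zero]
    · refine Or.inr ⟨-a, hRsym a ha, ?_⟩
      symm; apply inv_eq_of_mul_eq_one_right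
      simp [one_def, -DihedralGroup.r_zero]
  · rw [Finset.card_union_of_disjoint, Finset.card_image_of_injective _ hsrinj,
      Finset.card_image_of_injective _ hrinj]
    simp only [Finset.disjoint_left, mem_image]
    rintro x ⟨a, _, rfl⟩ ⟨b, _, h⟩
    exact absurd h (by simp)
  · rintro (t | t)
    · rcases hrot t with rfl | ht | ⟨a, ha, b, hb, rfl⟩
      · exact Or.inl rfl
      · exact Or.inr <| Or.inl <| by simp only [mem_union, mem_image]; exact Or.inr ⟨t, ht, rfl⟩
      · refine Or.inr <| Or.inr ⟨sr b, ?_, sr a, ?_, by simp⟩ <;>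
          · simp only [mem_union, mem_image]
            exact Or.inl ⟨_, by assumption, rfl⟩
    · rcases hrefl t with ht | ⟨a, ha, b, hb, rfl⟩
      · exact Or.inr <| Or.inl <| by simp only [mem_union, mem_image]; exact Or.inl ⟨t, ht, rfl⟩
      · refine Or.inr <| Or.inr ⟨sr a, ?_, DihedralGroup.r b, ?_, by simp⟩
        · simp only [mem_union, mem_image]; exact Or.inl ⟨a, ha, rfl⟩
        · simp only [mem_union, mem_image]; exact Or.inr ⟨b, hb, rfl⟩


open DihedralGroup Finset in
lemma upper_count {n d : ℕ} (hn : 0 < n) (S : Finset (DihedralGroup n))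
    (hinv : ∀ s ∈ S, s⁻¹ ∈ S) (hcard : S.card = d)
    (hcov : ∀ g : DihedralGroup n, g = 1 ∨ g ∈ S ∨ ∃ a ∈ S, ∃ b ∈ S, g = a * b) :
    4 * n ≤ (d + 1) ^ 2 := by
  classical
  haveI : NeZero n := ⟨hn.ne'⟩
  set Dr : Finset (ZMod n) := Finset.univ.filter (fun i => sr i ∈ S) with hDr
  set Rr : Finset (ZMod n) := Finset.univ.filter (fun i => DihedralGroup.r i ∈ S) with hRr
  have hsrinj : Function.Injective (sr (n := n)) := fun a b h => by injection h
  have hrinj : Function.Injective (DihedralGroup.r (n := n)) := fun a b h => by injection h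
  -- S decomposes
  have hS : S = Dr.image sr ∪ Rr.image DihedralGroup.r := by
    ext g
    cases g with
    | r j => simp [hDr, hRr, hsrinj.eq_iff, hrinj.eq_iff]
    | sr j => simp [hDr, hRr, hsrinj.eq_iff, hrinj.eq_iff]
  have hcards : Dr.card + Rr.card = d := by
    rw [← hcard, hS, Finset.card_union_of_disjoint, Finset.card_image_of_injective _ hsrinj,
      Finset.card_image_of_injective _ hrinj]
    simp only [Finset.disjoint_left, mem_image]
    rintro x ⟨a, _, rfl⟩ ⟨b, _, h⟩
    exact absurd h (by simp)
  -- every reflection index is in Dr or Dr + Rr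
  have hsub : (Finset.univ : Finset (ZMod n)) ⊆ Dr ∪ Finset.image₂ (· + ·) Dr Rr := by
    intro t _
    rcases hcov (sr t) with h1 | hS' | ⟨a, ha, b, hb, hab⟩
    · exact absurd h1 (by simp [one_def, -DihedralGroup.r_zero])
    · exact Finset.mem_union_left _ (by simp [hDr, hS'])
    · apply Finset.mem_union_right
      cases a with
      | r i => cases b with
        | r j => exact absurd hab (by simp)
        | sr j =>
          rw [r_mul_sr] at hab
          obtain rfl : t = j - i := by injection hab
          have hi : (-i : ZMod n) ∈ Rr := by
            have := hinv _ ha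
            have hri : (DihedralGroup.r i)⁻¹ = DihedralGroup.r (-i) := by
              apply inv_eq_of_mul_eq_one_right; simp [one_def, -DihedralGroup.r_zero]
            rw [hri] at this
            simp [hRr, this]
          have hj : j ∈ Dr := by simp [hDr, hb]
          exact Finset.mem_image₂.2 ⟨j, hj, -i, hi, by ring⟩
      | sr i => cases b with
        | r j =>
          rw [sr_mul_r] at hab
          obtain rfl : t = i + j := by injection hab
          exact Finset.mem_image₂.2 ⟨i, by simp [hDr, ha], j, by simp [hRr, hb], rfl⟩
        | sr j => exact absurd hab (by simp)
  have hn' : n ≤ Dr.card + Dr.card * Rr.card := by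
    calc n = Fintype.card (ZMod n) := (ZMod.card n).symm
    _ = (Finset.univ : Finset (ZMod n)).card := (Finset.card_univ).symm
    _ ≤ (Dr ∪ Finset.image₂ (· + ·) Dr Rr).card := Finset.card_le_card hsub
    _ ≤ Dr.card + (Finset.image₂ (· + ·) Dr Rr).card := Finset.card_union_le _ _
    _ ≤ Dr.card + Dr.card * Rr.card := by
        exact Nat.add_le_add_left (Finset.card_image₂_le _ _ _) _
  nlinarith [hn', hcards, sq_nonneg (Dr.card - Rr.card - 1 : ℤ)]


open Finset in
lemma exists_DR (p : ℕ) (hp : p.Prime) :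
    ∃ D R : Finset (ZMod (p ^ 2 - 1)),
      D.card = p + 1 ∧ R.card = p - 2 ∧
      (0 : ZMod (p ^ 2 - 1)) ∉ R ∧ (∀ x ∈ R, -x ∈ R) ∧
      (∀ t : ZMod (p ^ 2 - 1), t = 0 ∨ t ∈ R ∨ ∃ a ∈ D, ∃ b ∈ D, t = a - b) ∧
      (∀ t : ZMod (p ^ 2 - 1), t ∈ D ∨ ∃ a ∈ D, ∃ b ∈ R, t = a + b) := by
  classical
  haveI : Fact p.Prime := ⟨hp⟩
  set F := GaloisField p 2 with hF
  haveI : Fintype F := Fintype.ofFinite F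
  set i : ZMod p →+* F := algebraMap (ZMod p) F with hi
  have hii : Function.Injective i := i.injective
  have hcardF : Nat.card F = p ^ 2 := GaloisField.card p 2 (by norm_num)
  -- choose θ outside the prime field
  have hθex : ∃ θ : F, θ ∉ Set.range i := by
    by_contra h
    push_neg at h
    have hs : Function.Surjective i := fun z => h z
    have := Nat.card_le_card_of_surjective i hs
    rw [hcardF, Nat.card_eq_fintype_card, ZMod.card] at this
    nlinarith [hp.two_le]
  obtain ⟨θ, hθ⟩ := hθex
  -- decomposition along the basis {1, θ}
  have hdec : ∀ z : F, ∃ s t : ZMod p, z = i s + i t * θ := by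
    have hinj : Function.Injective (fun st : ZMod p × ZMod p => i st.1 + i st.2 * θ) := by
      rintro ⟨s, t⟩ ⟨s', t'⟩ h
      simp only at h
      by_cases ht : t = t'
      · subst ht
        exact Prod.ext (hii (add_right_cancel h)) rfl
      · exfalso
        apply hθ
        have hne : i t' - i t ≠ 0 := sub_ne_zero.mpr (fun h0 => ht (hii h0).symm)
        refine ⟨(s - s') / (t' - t), ?_⟩
        rw [map_div₀, map_sub, map_sub, div_eq_iff hne]
        linear_combination h
    have hsj : Function.Surjective (fun st : ZMod p × ZMod p => i st.1 + i st.2 * θ) := by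
      have hcards : Fintype.card (ZMod p × ZMod p) = Fintype.card F := by
        rw [Fintype.card_prod, ZMod.card, ← Nat.card_eq_fintype_card, hcardF]; ring
      exact ((Fintype.bijective_iff_injective_and_card _).2 ⟨hinj, hcards⟩).2
    intro z
    obtain ⟨⟨s, t⟩, h⟩ := hsj z
    exact ⟨s, t, h.symm⟩
  -- B elements are nonzero
  have hB0 : ∀ x : ZMod p, θ + i x ≠ 0 := by
    intro x h
    exact hθ ⟨-x, by rw [map_neg]; exact (eq_neg_of_add_eq_zero_left h).symm⟩
  -- the cyclic group of units, and the discrete log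
  have hn : Nat.card Fˣ = p ^ 2 - 1 := by
    rw [Nat.card_units, hcardF]
  have φ' := zmodCyclicMulEquiv (G := Fˣ) inferInstance
  rw [hn] at φ'
  set φ : Multiplicative (ZMod (p ^ 2 - 1)) ≃* Fˣ := φ' with hφ
  set l : Fˣ → ZMod (p ^ 2 - 1) := fun u => Multiplicative.toAdd (φ.symm u) with hl
  have hl_mul : ∀ u v : Fˣ, l (u * v) = l u + l v := by
    intro u v; simp [hl, map_mul]
  have hl_one : l 1 = 0 := by simp [hl]
  have hl_inj : Function.Injective l := fun u v h => by
    have : φ.symm u = φ.symm v := by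
      exact Multiplicative.toAdd.injective h
    exact φ.symm.injective this
  have hl_sect : ∀ t : ZMod (p ^ 2 - 1), l (φ (Multiplicative.ofAdd t)) = t := by
    intro t; simp [hl]
  have hl_inv : ∀ u : Fˣ, l u⁻¹ = - l u := by
    intro u; simp [hl, map_inv]
  -- the unit-valued building blocks
  set bu : ZMod p → Fˣ := fun x => Units.mk0 (θ + i x) (hB0 x) with hbu
  set au : (ZMod p)ˣ → Fˣ := fun a => Units.map i.toMonoidHom a with hau
  have hau_coe : ∀ a : (ZMod p)ˣ, (au a : F) = i (a : ZMod p) := fun a => rfl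
  have hau_one : au 1 = 1 := Units.ext (by rw [hau_coe, Units.val_one, Units.val_one, map_one])
  have hau_inv : ∀ a : (ZMod p)ˣ, au a⁻¹ = (au a)⁻¹ := fun a =>
    map_inv (Units.map i.toMonoidHom) a
  have hbu_inj : Function.Injective bu := by
    intro x y h
    have : θ + i x = θ + i y := congrArg Units.val h
    exact hii (add_left_cancel this)
  have hau_inj : Function.Injective au :=
    Units.map_injective (f := i.toMonoidHom) hii
  have hbu_range : ∀ x : ZMod p, (bu x : F) ∉ Set.range i := by
    intro x ⟨c, hc⟩
    exact hθ ⟨c - x, by rw [map_sub, hc]; simp [hbu]⟩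
  -- the sets D and R
  set D : Finset (ZMod (p ^ 2 - 1)) :=
    insert 0 (Finset.univ.image (fun x : ZMod p => l (bu x))) with hD
  set R : Finset (ZMod (p ^ 2 - 1)) :=
    (Finset.univ.image (fun a : (ZMod p)ˣ => l (au a))).erase 0 with hR
  have h0D : (0 : ZMod (p ^ 2 - 1)) ∈ D := Finset.mem_insert_self _ _
  have hbuD : ∀ x : ZMod p, l (bu x) ∈ D := by
    intro x
    exact Finset.mem_insert_of_mem (Finset.mem_image.2 ⟨x, Finset.mem_univ _, rfl⟩)
  refine ⟨D, R, ?_, ?_, ?_, ?_, ?_, ?_⟩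
  · -- card D
    rw [hD, Finset.card_insert_of_notMem, Finset.card_image_of_injective _ (show Function.Injective (fun x : ZMod p => l (bu x)) from fun a b h => hbu_inj (hl_inj h)),
      Finset.card_univ, ZMod.card]
    intro hmem
    obtain ⟨x, -, hx⟩ := Finset.mem_image.1 hmem
    rw [← hl_one] at hx
    have : bu x = 1 := hl_inj hx
    exact hbu_range x ⟨1, by rw [map_one, this, Units.val_one]⟩
  · -- card R
    have h0mem : (0 : ZMod (p ^ 2 - 1)) ∈ Finset.univ.image (fun a : (ZMod p)ˣ => l (au a)) := by
      have h1 : l (au 1) = 0 := by rw [hau_one, hl_one]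
      exact Finset.mem_image.2 ⟨1, Finset.mem_univ _, h1⟩
    rw [hR, Finset.card_erase_of_mem h0mem, Finset.card_image_of_injective _ (show Function.Injective (fun a : (ZMod p)ˣ => l (au a)) from fun a b h => hau_inj (hl_inj h)),
      Finset.card_univ, Fintype.card_units (α := ZMod p), ZMod.card]
    omega
  · exact Finset.notMem_erase _ _
  · -- symmetry of R
    intro x hx
    rw [hR, Finset.mem_erase] at hx ⊢
    obtain ⟨hx0, hmem⟩ := hx
    obtain ⟨a, -, ha⟩ := Finset.mem_image.1 hmem
    refine ⟨by simpa using hx0, Finset.mem_image.2 ⟨a⁻¹, Finset.mem_univ _, ?_⟩⟩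
    show l (au a⁻¹) = -x
    rw [hau_inv, hl_inv, ha]
  · -- rotations
    intro t
    set u : Fˣ := φ (Multiplicative.ofAdd t) with hu
    have hut : l u = t := hl_sect t
    by_cases hur : (u : F) ∈ Set.range i
    · by_cases ht0 : t = 0
      · exact Or.inl ht0
      · refine Or.inr (Or.inl ?_)
        obtain ⟨c, hc⟩ := hur
        have hc0 : c ≠ 0 := by
          rintro rfl
          exact u.ne_zero (by rw [← hc, map_zero])
        have : au (Units.mk0 c hc0) = u := Units.ext (by rw [hau_coe]; exact hc)
        rw [hR, Finset.mem_erase]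
        exact ⟨ht0, Finset.mem_image.2 ⟨Units.mk0 c hc0, Finset.mem_univ _, by rw [this, hut]⟩⟩
    · refine Or.inr (Or.inr ?_)
      obtain ⟨s, t₀, hst⟩ := hdec (u : F)
      have ht₀ : t₀ ≠ 0 := by
        rintro rfl
        exact hur ⟨s, by rw [hst, map_zero, zero_mul, add_zero]⟩
      obtain ⟨s', t₁, hst'⟩ := hdec ((u : F) * θ)
      set x : ZMod p := (1 - t₁) / t₀ with hx
      set y : ZMod p := s' + s * x with hy
      have key : (u : F) * (θ + i x) = θ + i y := by
        have hxx : t₁ + t₀ * x = 1 := by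
          rw [hx]; field_simp; ring
        calc (u : F) * (θ + i x) = (u : F) * θ + (u : F) * i x := by ring
        _ = (i s' + i t₁ * θ) + (i s + i t₀ * θ) * i x := by rw [← hst', ← hst]
        _ = i (s' + s * x) + i (t₁ + t₀ * x) * θ := by
            rw [map_add, map_add, map_mul, map_mul]; ring
        _ = θ + i y := by rw [hxx, map_one, one_mul, hy]; ring
      have kuy : u = bu y * (bu x)⁻¹ := by
        apply Units.ext
        rw [Units.val_mul]
        rw [Units.val_inv_eq_inv_val]
        show (u : F) = (θ + i y) * (θ + i x)⁻¹
        rw [eq_mul_inv_iff_mul_eq₀ (hB0 x)]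
        exact key
      refine ⟨l (bu y), hbuD y, l (bu x), hbuD x, ?_⟩
      rw [← hut, kuy, hl_mul, hl_inv, sub_eq_add_neg]
  · -- reflections
    intro t
    set u : Fˣ := φ (Multiplicative.ofAdd t) with hu
    have hut : l u = t := hl_sect t
    by_cases hur : (u : F) ∈ Set.range i
    · by_cases ht0 : t = 0
      · exact Or.inl (ht0 ▸ h0D)
      · refine Or.inr ⟨0, h0D, t, ?_, (zero_add t).symm⟩
        obtain ⟨c, hc⟩ := hur
        have hc0 : c ≠ 0 := by
          rintro rfl
          exact u.ne_zero (by rw [← hc, map_zero])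
        have : au (Units.mk0 c hc0) = u := Units.ext (by rw [hau_coe]; exact hc)
        rw [hR, Finset.mem_erase]
        exact ⟨ht0, Finset.mem_image.2 ⟨Units.mk0 c hc0, Finset.mem_univ _, by rw [this, hut]⟩⟩
    · obtain ⟨s, t₀, hst⟩ := hdec (u : F)
      have ht₀ : t₀ ≠ 0 := by
        rintro rfl
        exact hur ⟨s, by rw [hst, map_zero, zero_mul, add_zero]⟩
      have key : (u : F) = i t₀ * (θ + i (s / t₀)) := by
        rw [hst, mul_add, ← map_mul]
        rw [mul_div_cancel₀ _ ht₀]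
        ring
      by_cases ht1 : t₀ = 1
      · -- u = bu (s / t₀) : t ∈ D
        refine Or.inl ?_
        have : u = bu (s / t₀) := by
          apply Units.ext
          rw [key, ht1, map_one, one_mul]; rfl
        rw [← hut, this]
        exact hbuD _
      · refine Or.inr ⟨l (bu (s / t₀)), hbuD _, l (au (Units.mk0 t₀ ht₀)), ?_, ?_⟩
        · rw [hR, Finset.mem_erase]
          refine ⟨?_, Finset.mem_image.2 ⟨Units.mk0 t₀ ht₀, Finset.mem_univ _, rfl⟩⟩
          intro h0
          rw [← hl_one] at h0
          have : au (Units.mk0 t₀ ht₀) = 1 := hl_inj h0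
          apply ht1
          apply hii
          rw [map_one]
          have := congrArg Units.val this
          rw [hau_coe] at this
          exact this
        · have : u = bu (s / t₀) * au (Units.mk0 t₀ ht₀) := by
            apply Units.ext
            rw [Units.val_mul, hau_coe, key]
            simp [hbu]
            ring
          rw [← hut, this, hl_mul]

section assembly


def DCset (d : ℕ) : Set ℕ :=
  {m : ℕ | ∃ n : ℕ, 0 < n ∧ m = 2 * n ∧
    ∃ S : Finset (DihedralGroup n),
      (1 : DihedralGroup n) ∉ S ∧
      (∀ s ∈ S, s⁻¹ ∈ S) ∧
      S.card = d ∧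
      (∀ g : DihedralGroup n, g = 1 ∨ g ∈ S ∨ ∃ a ∈ S, ∃ b ∈ S, g = a * b)}

lemma DC_eq (d : ℕ) : DC d = sSup (DCset d) := rfl

lemma DCset_bound {d m : ℕ} (hm : m ∈ DCset d) : 2 * m ≤ (d + 1) ^ 2 := by
  obtain ⟨n, hn, rfl, S, _, hinv, hcard, hcov⟩ := hm
  have := upper_count hn S hinv hcard hcov
  omega

lemma DCset_bdd (d : ℕ) : BddAbove (DCset d) :=
  ⟨(d + 1) ^ 2, fun m hm => by have := DCset_bound hm; omega⟩

lemma DC_le (d : ℕ) : 2 * DC d ≤ (d + 1) ^ 2 := by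
  rcases Set.eq_empty_or_nonempty (DCset d) with h | h
  · rw [DC_eq, h, csSup_empty]
    simp only [bot_eq_zero']
    positivity
  · exact DCset_bound (Nat.sSup_mem h (DCset_bdd d))

lemma DC_ge (p : ℕ) (hp : p.Prime) : 2 * (p ^ 2 - 1) ≤ DC (2 * p - 1) := by
  have hp2 := hp.two_le
  apply le_csSup (DCset_bdd _)
  obtain ⟨D, R, hDc, hRc, h0R, hsym, hrot, hrefl⟩ := exists_DR p hp
  obtain ⟨S, h1, hinv, hcard, hcov⟩ := dihedral_of_DR D R h0R hsym hrot hrefl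
  refine ⟨p ^ 2 - 1, ?_, rfl, S, h1, hinv, by omega, hcov⟩
  have : 4 ≤ p ^ 2 := by nlinarith
  omega

/-- **Corollary (limsup form).** `limsup_{d → ∞} DC(d,2)/d² = 1/2`. -/
theorem limsup_DC_div_sq : Filter.limsup (fun d : ℕ => (DC d : ℝ) / (d : ℝ) ^ 2)
    Filter.atTop = 1 / 2 := by
  set f : ℕ → ℝ := fun d => (DC d : ℝ) / (d : ℝ) ^ 2 with hf
  have hDCle : ∀ d : ℕ, (DC d : ℝ) ≤ ((d : ℝ) + 1) ^ 2 / 2 := by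
    intro d
    have h := DC_le d
    have : (2 * DC d : ℝ) ≤ (((d + 1) ^ 2 : ℕ) : ℝ) := by exact_mod_cast h
    push_cast at this
    linarith
  set g : ℕ → ℝ := fun d => (1 + (d : ℝ)⁻¹) ^ 2 / 2 with hg
  have hfg : ∀ d : ℕ, 1 ≤ d → f d ≤ g d := by
    intro d hd
    have hd0 : (0 : ℝ) < (d : ℝ) := by exact_mod_cast hd
    have hne : (d : ℝ) ≠ 0 := hd0.ne'
    have key : g d = ((d : ℝ) + 1) ^ 2 / 2 / (d : ℝ) ^ 2 := by
      rw [hg]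
      field_simp
    simp only [hf]
    rw [key]
    gcongr
    exact hDCle d
  have hgtend : Filter.Tendsto g Filter.atTop (nhds (1 / 2)) := by
    have h1 : Filter.Tendsto (fun d : ℕ => (d : ℝ)⁻¹) Filter.atTop (nhds 0) :=
      tendsto_inv_atTop_zero.comp tendsto_natCast_atTop_atTop
    have h2 := ((h1.const_add 1).pow 2).div_const 2
    norm_num at h2
    convert h2 using 2
  have hgbdd : Filter.IsBoundedUnder (· ≤ ·) Filter.atTop g := hgtend.isBoundedUnder_le
  have hfnonneg : ∀ d, 0 ≤ f d := fun d => by positivity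
  have hfcobdd : Filter.IsCoboundedUnder (· ≤ ·) Filter.atTop f :=
    Filter.IsBoundedUnder.isCoboundedUnder_le
      (Filter.isBoundedUnder_of ⟨0, fun d => hfnonneg d⟩)
  have hfg_ev : f ≤ᶠ[Filter.atTop] g := by
    filter_upwards [Filter.eventually_ge_atTop 1] with d hd using hfg d hd
  have hfbdd : Filter.IsBoundedUnder (· ≤ ·) Filter.atTop f := hgbdd.mono_le hfg_ev
  apply le_antisymm
  · have hle : Filter.limsup f Filter.atTop ≤ Filter.limsup g Filter.atTop :=
      Filter.limsup_le_limsup hfg_ev hfcobdd hgbdd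
    rwa [hgtend.limsup_eq] at hle
  · apply Filter.le_limsup_of_frequently_le _ hfbdd
    rw [Filter.frequently_atTop]
    intro N
    obtain ⟨p, hpN, hp⟩ := Nat.exists_infinite_primes (N + 2)
    have hp2 : 2 ≤ p := hp.two_le
    refine ⟨2 * p - 1, by omega, ?_⟩
    have hDC := DC_ge p hp
    have hd : ((2 * p - 1 : ℕ) : ℝ) = 2 * (p : ℝ) - 1 := by
      have : (1 : ℕ) ≤ 2 * p := by omega
      push_cast [Nat.cast_sub this]
      ring
    have hnum : ((2 * (p ^ 2 - 1) : ℕ) : ℝ) = 2 * (p : ℝ) ^ 2 - 2 := by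
      have : (1 : ℕ) ≤ p ^ 2 := by nlinarith
      push_cast [Nat.cast_sub this]
      ring
    have hcast : (2 * (p : ℝ) ^ 2 - 2) ≤ (DC (2 * p - 1) : ℝ) := by
      rw [← hnum]
      exact_mod_cast hDC
    have hpR : (2 : ℝ) ≤ (p : ℝ) := by exact_mod_cast hp2
    simp only [hf]
    rw [le_div_iff₀ (by rw [hd]; nlinarith), hd]
    nlinarith

end assembly
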